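/- arXiv:2302.12409 — 2 statements merged into one kernel-verified Lean document; each statement's English description precedes it below -/
import Mathlib

section
/- Let 1 ≤ l < k ≤ n, let δ ∈ (0,1), and let A > 0. There exists a constant δ′ > 0, depending only on A, δ, n, k and l, with the following property: if λ = (λ_1,…,λ_n) ∈ Γ_k satisfies λ_1 ≥ λ_2 ≥ ⋯ ≥ λ_n, λ_l ≥ δ λ_1 and λ_{l+1} ≤ δ′ λ_1, then for every index i > l one has σ_{k−1}(λ|i) ≥ A σ_k(λ)/λ_1. -/
open Finset Polynomial

/-- `esymmOn S m lam` is the m-th elementary symmetric polynomial of the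
components of `lam` with indices in `S` (zero for `m < 0`, and automatically
zero for `m > |S|`). For `S = {i}ᶜ` this is `σ_m(λ|i)`, etc. -/
noncomputable def esymmOn {n : ℕ} (S : Finset (Fin n)) (m : ℤ) (lam : Fin n → ℝ) : ℝ :=
  if m < 0 then 0 else ∑ s ∈ S.powersetCard m.toNat, ∏ i ∈ s, lam i

/-- `σ_m(λ)` for the full vector. -/
noncomputable def esymm {n : ℕ} (m : ℤ) (lam : Fin n → ℝ) : ℝ :=
  esymmOn Finset.univ m lam

/-- Garding's cone `Γ_k`. -/
def GammaCone {n : ℕ} (k : ℕ) (lam : Fin n → ℝ) : Prop :=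
  ∀ j : ℕ, 1 ≤ j → j ≤ k → 0 < esymm (j : ℤ) lam

set_option linter.unusedVariables false
set_option maxHeartbeats 1000000

section ElemSym

/-- auxiliary: elementary symmetric polynomial over a finset, ℕ-indexed -/
noncomputable def eA {ι : Type*} [DecidableEq ι] (S : Finset ι) (m : ℕ) (f : ι → ℝ) : ℝ :=
  ∑ s ∈ S.powersetCard m, ∏ i ∈ s, f i

variable {ι : Type*} [DecidableEq ι]

lemma eA_zero (S : Finset ι) (f : ι → ℝ) : eA S 0 f = 1 := by
  simp [eA]

lemma eA_empty (m : ℕ) (f : ι → ℝ) (hm : 1 ≤ m) : eA (∅ : Finset ι) m f = 0 := by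
  cases m with
  | zero => omega
  | succ m => simp [eA, Finset.powersetCard_eq_empty.2 (by simp : (∅ : Finset ι).card < m + 1)]

lemma eA_of_card_lt {S : Finset ι} {m : ℕ} (h : S.card < m) (f : ι → ℝ) : eA S m f = 0 := by
  simp [eA, Finset.powersetCard_eq_empty.2 h]

lemma eA_insert {S : Finset ι} {a : ι} (ha : a ∉ S) (m : ℕ) (f : ι → ℝ) :
    eA (insert a S) (m + 1) f = eA S (m + 1) f + f a * eA S m f := by
  unfold eA
  rw [Finset.powersetCard_succ_insert ha, Finset.sum_union, Finset.sum_image, Finset.mul_sum]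
  · congr 1
    apply Finset.sum_congr rfl
    intro s hs
    rw [Finset.mem_powersetCard] at hs
    rw [Finset.prod_insert (fun h => ha (hs.1 h))]
  · intro s hs t ht hst
    rw [Finset.mem_coe, Finset.mem_powersetCard] at hs ht
    have hsa : a ∉ s := fun h => ha (hs.1 h)
    have hta : a ∉ t := fun h => ha (ht.1 h)
    rw [← Finset.erase_insert hsa, hst, Finset.erase_insert hta]
  · rw [Finset.disjoint_right]
    intro s hs hs'
    rw [Finset.mem_image] at hs
    obtain ⟨t, ht, rfl⟩ := hs
    rw [Finset.mem_powersetCard] at hs' ht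
    exact ha (hs'.1 (Finset.mem_insert_self a t))

lemma eA_erase {S : Finset ι} {a : ι} (ha : a ∈ S) (m : ℕ) (f : ι → ℝ) :
    eA S (m + 1) f = eA (S.erase a) (m + 1) f + f a * eA (S.erase a) m f := by
  conv_lhs => rw [← Finset.insert_erase ha]
  exact eA_insert (Finset.notMem_erase a S) m f

lemma eA_pos {S : Finset ι} {m : ℕ} {f : ι → ℝ} (hf : ∀ i ∈ S, 0 < f i) (hm : m ≤ S.card) :
    0 < eA S m f := by
  apply Finset.sum_pos
  · intro s hs
    rw [Finset.mem_powersetCard] at hs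
    exact Finset.prod_pos fun i hi => hf i (hs.1 hi)
  · exact Finset.powersetCard_nonempty.2 hm

lemma eA_nonneg {S : Finset ι} {m : ℕ} {f : ι → ℝ} (hf : ∀ i ∈ S, 0 ≤ f i) :
    0 ≤ eA S m f := by
  apply Finset.sum_nonneg
  intro s hs
  rw [Finset.mem_powersetCard] at hs
  exact Finset.prod_nonneg fun i hi => hf i (hs.1 hi)

lemma prod_le_eA {S T : Finset ι} {m : ℕ} {f : ι → ℝ} (hf : ∀ i ∈ S, 0 ≤ f i)
    (hT : T ∈ S.powersetCard m) : (∏ i ∈ T, f i) ≤ eA S m f := by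
  apply Finset.single_le_sum _ hT
  intro s hs
  rw [Finset.mem_powersetCard] at hs
  exact Finset.prod_nonneg fun i hi => hf i (hs.1 hi)

/-- complement form -/
lemma eA_compl {S : Finset ι} {m : ℕ} (hm : m ≤ S.card) (f : ι → ℝ) :
    eA S m f = ∑ s ∈ S.powersetCard (S.card - m), ∏ i ∈ S \ s, f i := by
  unfold eA
  apply Finset.sum_nbij' (fun s => S \ s) (fun s => S \ s)
  · intro s hs
    rw [Finset.mem_powersetCard] at hs ⊢
    exact ⟨Finset.sdiff_subset, by rw [Finset.card_sdiff_of_subset hs.1, hs.2]⟩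
  · intro s hs
    rw [Finset.mem_powersetCard] at hs ⊢
    refine ⟨Finset.sdiff_subset, ?_⟩
    rw [Finset.card_sdiff_of_subset hs.1, hs.2]
    omega
  · intro s hs
    rw [Finset.mem_powersetCard] at hs
    exact Finset.sdiff_sdiff_eq_self hs.1
  · intro s hs
    rw [Finset.mem_powersetCard] at hs
    exact Finset.sdiff_sdiff_eq_self hs.1
  · intro s hs
    rw [Finset.mem_powersetCard] at hs
    rw [Finset.sdiff_sdiff_eq_self hs.1]

lemma eA_one (S : Finset ι) (f : ι → ℝ) : eA S 1 f = ∑ i ∈ S, f i := by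
  unfold eA
  rw [Finset.powersetCard_one, Finset.sum_map]
  simp

lemma eA_self (S : Finset ι) (f : ι → ℝ) : eA S S.card f = ∏ i ∈ S, f i := by
  unfold eA
  rw [Finset.powersetCard_self, Finset.sum_singleton]

/-- square identity: `(e_1)^2 = Σ f² + 2 e_2` -/
lemma eA_sq_identity (S : Finset ι) (f : ι → ℝ) :
    (eA S 1 f) ^ 2 = (∑ i ∈ S, (f i) ^ 2) + 2 * eA S 2 f := by
  induction S using Finset.induction_on with
  | empty =>
    rw [eA_one, eA_empty 2 f (by norm_num)]
    simp
  | @insert a S ha ih =>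
    have h1 : eA (insert a S) 1 f = eA S 1 f + f a := by
      have := eA_insert ha 0 f
      rw [eA_zero] at this
      rw [this]; ring
    have h2 := eA_insert ha 1 f
    rw [h1, h2, Finset.sum_insert ha]
    rw [eA_one] at *
    nlinarith [ih]

/-- top-level Newton inequality, card = j+1 -/
lemma newton_top {S : Finset ι} {f : ι → ℝ} {j : ℕ} (hj : 1 ≤ j) (hcard : S.card = j + 1) :
    2 * ((j:ℝ)+1) * (eA S (j-1) f * eA S (j+1) f) ≤ (j : ℝ) * (eA S j f)^2 := by
  set y : ι → ℝ := fun i => ∏ x ∈ S.erase i, f x with hy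
  -- (a) eA S j f = ∑ y
  have ha : eA S j f = ∑ i ∈ S, y i := by
    rw [eA_compl (by omega : j ≤ S.card) f]
    have h1 : S.card - j = 1 := by omega
    rw [h1, Finset.powersetCard_one, Finset.sum_map]
    apply Finset.sum_congr rfl
    intro i hi
    simp only [Function.Embedding.coeFn_mk, Finset.sdiff_singleton_eq_erase]
    rfl
  -- (b)
  have hb : eA S (j+1) f = ∏ i ∈ S, f i := by rw [← hcard, eA_self]
  -- (c)
  have hc : eA S (j-1) f * eA S (j+1) f = eA S 2 y := by
    rw [hb, eA_compl (by omega : j - 1 ≤ S.card) f]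
    have h2 : S.card - (j-1) = 2 := by omega
    rw [h2, Finset.sum_mul]
    unfold eA
    apply Finset.sum_congr rfl
    intro s hs
    rw [Finset.mem_powersetCard] at hs
    obtain ⟨a, b, hab, rfl⟩ := Finset.card_eq_two.1 hs.2
    have haS : a ∈ S := hs.1 (by simp)
    have hbS : b ∈ S := hs.1 (by simp)
    have hD : S \ ({a, b} : Finset ι) = (S.erase a).erase b := by
      rw [Finset.sdiff_insert, Finset.sdiff_singleton_eq_erase, Finset.erase_right_comm]
    have hprod : ∏ i ∈ ({a,b} : Finset ι), y i = y a * y b := by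
      rw [Finset.prod_insert (by simp [hab]), Finset.prod_singleton]
    rw [hprod, hD, hy]
    have e1 : ∏ x ∈ S.erase a, f x = f b * ∏ x ∈ (S.erase a).erase b, f x :=
      (Finset.mul_prod_erase _ f (Finset.mem_erase.2 ⟨Ne.symm hab, hbS⟩)).symm
    have e2 : ∏ x ∈ S.erase b, f x = f a * ∏ x ∈ (S.erase b).erase a, f x :=
      (Finset.mul_prod_erase _ f (Finset.mem_erase.2 ⟨hab, haS⟩)).symm
    have e3 : ∏ i ∈ S, f i = f a * ∏ x ∈ S.erase a, f x :=
      (Finset.mul_prod_erase _ f haS).symm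
    have e4 : (S.erase b).erase a = (S.erase a).erase b := Finset.erase_right_comm
    simp only [e3, e1, e2, e4]
    ring
  -- Cauchy-Schwarz
  have hcs : (∑ i ∈ S, y i)^2 ≤ ((j:ℝ)+1) * ∑ i ∈ S, (y i)^2 := by
    have := sq_sum_le_card_mul_sum_sq (s := S) (f := y)
    rw [hcard] at this
    exact_mod_cast this
  have hid := eA_sq_identity S y
  rw [← eA_one S y] at hcs
  have hy2 : (0:ℝ) ≤ ∑ i ∈ S, (y i)^2 :=
    Finset.sum_nonneg fun i _ => sq_nonneg _
  rw [hc, ha, ← eA_one S y]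
  nlinarith [hid, hcs]

lemma fact_aux1 : ∀ a : ℕ, (a+1).descFactorial a = Nat.factorial (a+1)
  | 0 => rfl
  | a+1 => by
    have h : (a+2).descFactorial (a+1) = (a+2) * ((a+1).descFactorial a) :=
      Nat.succ_descFactorial_succ (a+1) a
    rw [h, fact_aux1 a]
    exact (Nat.factorial_succ (a+1)).symm

lemma fact_aux2 : ∀ a : ℕ, 2 * ((a+2).descFactorial a) = Nat.factorial (a+2)
  | 0 => rfl
  | a+1 => by
    have h : (a+3).descFactorial (a+1) = (a+3) * ((a+2).descFactorial a) :=
      Nat.succ_descFactorial_succ (a+2) a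
    show 2 * ((a+3).descFactorial (a+1)) = Nat.factorial (a+3)
    rw [h, show Nat.factorial (a+3) = (a+3) * Nat.factorial (a+2) from Nat.factorial_succ _,
      ← fact_aux2 a]
    ring

lemma desc_identity (a : ℕ) :
    2 * (a+1) * ((a+2).descFactorial a) * (a.descFactorial a) = (a+2) * ((a+1).descFactorial a)^2 := by
  rw [fact_aux1, Nat.descFactorial_self]
  have h2 := fact_aux2 a
  calc 2 * (a+1) * ((a+2).descFactorial a) * Nat.factorial a
      = (a+1) * (2 * ((a+2).descFactorial a)) * Nat.factorial a := by ring
    _ = (a+1) * Nat.factorial (a+2) * Nat.factorial a := by rw [h2]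
    _ = (a+2) * (Nat.factorial (a+1))^2 := by
        rw [Nat.factorial_succ (a+1), Nat.factorial_succ a]
        ring

/-- Newton's inequality for arbitrary real tuples. -/
theorem newton_ineq {S : Finset ι} (f : ι → ℝ) {j : ℕ} (hj : 1 ≤ j) (hjc : j + 1 ≤ S.card) :
    (((j+1) * (S.card - j + 1) : ℕ) : ℝ) * (eA S (j-1) f * eA S (j+1) f)
      ≤ ((j * (S.card - j) : ℕ) : ℝ) * (eA S j f)^2 := by
  classical
  set M := S.card with hM
  set d := M - j - 1 with hd
  set p : ℝ[X] := ∏ i ∈ S, (X + C (f i)) with hp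
  have hmonic : p.Monic := monic_prod_of_monic _ _ fun i _ => monic_X_add_C (f i)
  have hpne : p ≠ 0 := hmonic.ne_zero
  have hpdeg : p.natDegree = M := by
    rw [hp, natDegree_prod _ _ (fun i _ => (monic_X_add_C (f i)).ne_zero)]
    simp [natDegree_X_add_C, hM]
  have hcoeff : ∀ r : ℕ, r ≤ M → p.coeff (M - r) = eA S r f := by
    intro r hr
    rw [hp, Finset.prod_X_add_C_coeff S f (by omega : M - r ≤ S.card)]
    rw [show S.card - (M - r) = r by omega]
    rfl
  have hsplits : p.Splits := by
    rw [hp]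
    apply Splits.prod
    intro i _
    have : (X + C (f i)) = X - C (-(f i)) := by rw [map_neg, sub_neg_eq_add]
    rw [this]
    exact Splits.X_sub_C _
  have hroots : Multiset.card p.roots = M := by
    rw [splits_iff_card_roots.1 hsplits, hpdeg]
  set q : ℝ[X] := derivative^[d] p with hq
  -- roots count lower bound
  have hrootsit : ∀ t : ℕ, M ≤ Multiset.card (derivative^[t] p).roots + t := by
    intro t
    induction t with
    | zero => simp [hroots]
    | succ t ih =>
      have h2 := Polynomial.card_roots_le_derivative (derivative^[t] p)
      rw [Function.iterate_succ_apply' derivative t p]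
      omega
  have hqdeg_le : q.natDegree ≤ j + 1 := by
    have h2 := natDegree_iterate_derivative p d
    rw [hpdeg, ← hq] at h2
    omega
  have hqroots_ge : j + 1 ≤ Multiset.card q.roots := by
    have h2 := hrootsit d
    rw [← hq] at h2
    omega
  have hqroots : Multiset.card q.roots = j + 1 :=
    le_antisymm (le_trans (card_roots' q) hqdeg_le) hqroots_ge
  have hqdeg : q.natDegree = j + 1 :=
    le_antisymm hqdeg_le (le_trans hqroots_ge (card_roots' q))
  have hqne : q ≠ 0 := by
    intro h
    rw [h] at hqroots
    simp at hqroots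
  have hqsplits : q.Splits := splits_iff_card_roots.2 (by rw [hqroots, hqdeg])
  have hqfact : q = C q.leadingCoeff * (q.roots.map fun a => X - C a).prod :=
    hqsplits.eq_prod_roots
  set w : Multiset ℝ := q.roots.map Neg.neg with hw
  have hwcard : Multiset.card w = j + 1 := by rw [hw, Multiset.card_map, hqroots]
  have hmapeq : (q.roots.map fun a => X - C a) = w.map fun a => X + C a := by
    rw [hw, Multiset.map_map]
    apply Multiset.map_congr rfl
    intro x _
    simp [sub_eq_add_neg, map_neg]
  -- coefficients of q via Vieta
  have hcoeffq : ∀ r : ℕ, r ≤ j + 1 →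
      q.leadingCoeff * w.esymm r = q.coeff (j + 1 - r) := by
    intro r hr
    conv_rhs => rw [hqfact]
    rw [hmapeq, coeff_C_mul, Multiset.prod_X_add_C_coeff w (by omega : j + 1 - r ≤ Multiset.card w)]
    rw [hwcard, show j + 1 - (j + 1 - r) = r by omega]
  -- coefficients of q via derivative
  have hcoeffq2 : ∀ k : ℕ, q.coeff k = (((k + d).descFactorial d : ℕ) : ℝ) * p.coeff (k + d) := by
    intro k
    rw [hq, Polynomial.coeff_iterate_derivative, nsmul_eq_mul]
  have hlc : q.leadingCoeff = ((M.descFactorial d : ℕ) : ℝ) := by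
    rw [Polynomial.leadingCoeff, hqdeg, hcoeffq2 (j+1), show j + 1 + d = M by omega,
      ← hpdeg, hmonic.coeff_natDegree, mul_one]
  -- key identity
  have hkey : ∀ r : ℕ, r ≤ j + 1 →
      ((M.descFactorial d : ℕ) : ℝ) * w.esymm r = (((M - r).descFactorial d : ℕ) : ℝ) * eA S r f := by
    intro r hr
    rw [← hlc, hcoeffq r hr, hcoeffq2, show j + 1 - r + d = M - r by omega,
      hcoeff r (by omega)]
  -- bridge to eA over Fin
  set L : List ℝ := w.toList with hL
  have hLlen : L.length = j + 1 := by rw [hL, Multiset.length_toList, hwcard]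
  have hbridge : ∀ r : ℕ, w.esymm r = eA (univ : Finset (Fin L.length)) r L.get := by
    intro r
    have h1 : ((univ : Finset (Fin L.length)).val.map L.get) = w := by
      have : (univ : Finset (Fin L.length)).val = ↑(List.finRange L.length) := rfl
      rw [this, Multiset.map_coe, List.map_get_finRange, hL, Multiset.coe_toList]
    rw [← h1, Finset.esymm_map_val]
    rfl
  -- apply top-level Newton over Fin L.length
  have hcardU : (univ : Finset (Fin L.length)).card = j + 1 := by
    rw [Finset.card_univ, Fintype.card_fin, hLlen]
  have hnewton := newton_top (S := (univ : Finset (Fin L.length))) (f := L.get) hj hcardU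
  set lc : ℝ := ((M.descFactorial d : ℕ) : ℝ) with hlcdef
  set A0 : ℝ := eA (univ : Finset (Fin L.length)) (j-1) L.get with hA0
  set A1 : ℝ := eA (univ : Finset (Fin L.length)) j L.get with hA1
  set A2 : ℝ := eA (univ : Finset (Fin L.length)) (j+1) L.get with hA2
  set E0 : ℝ := eA S (j-1) f with hE0
  set E1 : ℝ := eA S j f with hE1
  set E2 : ℝ := eA S (j+1) f with hE2
  set k0 : ℝ := (((M - (j-1)).descFactorial d : ℕ) : ℝ) with hk0
  set k1 : ℝ := (((M - j).descFactorial d : ℕ) : ℝ) with hk1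
  set k2 : ℝ := (((M - (j+1)).descFactorial d : ℕ) : ℝ) with hk2
  have h0 : lc * A0 = k0 * E0 := by
    rw [hA0, ← hbridge (j-1)]; exact hkey (j-1) (by omega)
  have h1 : lc * A1 = k1 * E1 := by
    rw [hA1, ← hbridge j]; exact hkey j (by omega)
  have h2 : lc * A2 = k2 * E2 := by
    rw [hA2, ← hbridge (j+1)]; exact hkey (j+1) (by omega)
  have hmul := mul_le_mul_of_nonneg_left hnewton (sq_nonneg lc)
  have hLHS : lc^2 * (2 * ((j:ℝ)+1) * (A0 * A2)) = 2 * ((j:ℝ)+1) * ((k0*E0) * (k2*E2)) := by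
    rw [← h0, ← h2]; ring
  have hRHS : lc^2 * ((j:ℝ) * A1^2) = (j:ℝ) * (k1*E1)^2 := by
    rw [← h1]; ring
  rw [hLHS, hRHS] at hmul
  -- nat identity
  have hnat : 2 * (M-j) * ((M-(j-1)).descFactorial d) * ((M-(j+1)).descFactorial d)
      = (M-j+1) * ((M-j).descFactorial d)^2 := by
    have e0 : M - (j-1) = d + 2 := by omega
    have e1 : M - j = d + 1 := by omega
    have e2 : M - (j+1) = d := by omega
    rw [e0, e1, e2]
    exact desc_identity d
  have hnatR : 2 * ((M-j : ℕ) : ℝ) * k0 * k2 = ((M-j+1 : ℕ) : ℝ) * k1^2 := by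
    rw [hk0, hk1, hk2]
    exact_mod_cast congrArg (Nat.cast : ℕ → ℝ) hnat
  have hMj : (0:ℝ) ≤ ((M-j : ℕ) : ℝ) := Nat.cast_nonneg _
  have hk1pos : (0:ℝ) < k1^2 := by
    have : 0 < (M-j).descFactorial d := by
      rw [show M - j = d + 1 by omega, fact_aux1 d]
      exact Nat.factorial_pos _
    rw [hk1]
    positivity
  -- final chain multiplied by k1^2
  have hfin : (((j+1) * (M - j + 1) : ℕ) : ℝ) * (E0 * E2) * k1^2
      ≤ ((j * (M - j) : ℕ) : ℝ) * E1^2 * k1^2 := by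
    have hstep := mul_le_mul_of_nonneg_left hmul hMj
    calc (((j+1) * (M - j + 1) : ℕ) : ℝ) * (E0 * E2) * k1^2
        = ((j:ℝ)+1) * (((M-j+1 : ℕ) : ℝ) * k1^2) * (E0 * E2) := by push_cast; ring
      _ = ((j:ℝ)+1) * (2 * ((M-j : ℕ) : ℝ) * k0 * k2) * (E0 * E2) := by rw [hnatR]
      _ = ((M-j : ℕ) : ℝ) * (2 * ((j:ℝ)+1) * ((k0*E0) * (k2*E2))) := by ring
      _ ≤ ((M-j : ℕ) : ℝ) * ((j:ℝ) * (k1*E1)^2) := hstep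
      _ = ((j * (M - j) : ℕ) : ℝ) * E1^2 * k1^2 := by push_cast; ring
  exact le_of_mul_le_mul_right hfin hk1pos

end ElemSym

section Cone

variable {n : ℕ}

/-- Garding cone predicate over a sub-finset. -/
def GammaOn (S : Finset (Fin n)) (k : ℕ) (lam : Fin n → ℝ) : Prop :=
  ∀ j : ℕ, 1 ≤ j → j ≤ k → 0 < eA S j lam

/-- `T` is a downward (by index) subset of `S`. -/
def DownIn (S T : Finset (Fin n)) : Prop :=
  T ⊆ S ∧ ∀ t ∈ T, ∀ u ∈ S \ T, t ≤ u

variable {lam : Fin n → ℝ} {k : ℕ}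

lemma gammaOn_pos {S : Finset (Fin n)} (h : GammaOn S k lam) {r : ℕ} (hr : r ≤ k) :
    0 < eA S r lam := by
  rcases Nat.eq_zero_or_pos r with h0 | h1
  · rw [h0, eA_zero]; norm_num
  · exact h r h1 hr

/-- deleting a nonpositive entry stays in the cone and increases `σ_j`. -/
lemma gamma_erase_nonpos {S : Finset (Fin n)} (hΓ : GammaOn S k lam) {u : Fin n}
    (hu : u ∈ S) (hneg : lam u ≤ 0) :
    ∀ j : ℕ, j ≤ k → 0 < eA (S.erase u) j lam ∧ eA S j lam ≤ eA (S.erase u) j lam := by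
  intro j
  induction j with
  | zero =>
    intro _
    rw [eA_zero, eA_zero]
    exact ⟨by norm_num, le_refl _⟩
  | succ j ih =>
    intro hjk
    have ihj := ih (by omega)
    have hrec := eA_erase hu j lam
    have hmul : lam u * eA (S.erase u) j lam ≤ 0 :=
      mul_nonpos_of_nonpos_of_nonneg hneg (le_of_lt ihj.1)
    have hS : 0 < eA S (j+1) lam := hΓ (j+1) (by omega) hjk
    constructor
    · linarith
    · linarith

lemma gamma_erase_nonpos' {S : Finset (Fin n)} (hΓ : GammaOn S k lam) {u : Fin n}
    (hu : u ∈ S) (hneg : lam u ≤ 0) : GammaOn (S.erase u) k lam :=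
  fun j _ hjk => (gamma_erase_nonpos hΓ hu hneg j hjk).1

/-- number of positive entries is at least `k`. -/
lemma gamma_card_pos : ∀ (S : Finset (Fin n)), GammaOn S k lam → 1 ≤ k →
    k ≤ (S.filter fun i => 0 < lam i).card := by
  intro S
  induction S using Finset.strongInduction with
  | _ S ih =>
    intro hΓ hk
    by_cases hpos : ∀ i ∈ S, 0 < lam i
    · have : S.filter (fun i => 0 < lam i) = S := Finset.filter_true_of_mem hpos
      rw [this]
      by_contra hlt
      push_neg at hlt
      have := hΓ k hk (le_refl k)
      rw [eA_of_card_lt hlt lam] at this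
      exact lt_irrefl _ this
    · push_neg at hpos
      obtain ⟨u, hu, hneg'⟩ := hpos
      have hsub : S.erase u ⊂ S := Finset.erase_ssubset hu
      have h2 := ih (S.erase u) hsub (gamma_erase_nonpos' hΓ hu hneg') hk
      have huf : u ∉ S.filter (fun i => 0 < lam i) := by
        simp only [Finset.mem_filter, not_and, not_lt]
        intro _; exact hneg'
      have : (S.erase u).filter (fun i => 0 < lam i) = S.filter (fun i => 0 < lam i) := by
        rw [Finset.filter_erase, Finset.erase_eq_of_notMem huf]
      rwa [this] at h2

/-- entries in a small downward set are positive. -/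
lemma down_pos (hanti : Antitone lam) {S T : Finset (Fin n)} (hΓ : GammaOn S k lam)
    (hdown : DownIn S T) (hcard : T.card ≤ k) (hk : 1 ≤ k) : ∀ i ∈ T, 0 < lam i := by
  intro i hi
  by_contra hni
  push_neg at hni
  set P := S.filter (fun x => 0 < lam x) with hP
  have hPk : k ≤ P.card := gamma_card_pos S hΓ hk
  have hPT : P ⊆ T := by
    intro p hp
    rw [hP, Finset.mem_filter] at hp
    by_contra hpT
    have hpST : p ∈ S \ T := Finset.mem_sdiff.2 ⟨hp.1, hpT⟩
    have hle : i ≤ p := hdown.2 i hi p hpST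
    have := hanti hle
    linarith [hp.2]
  have hiP : i ∉ P := by
    rw [hP, Finset.mem_filter]
    push_neg
    intro _; exact hni
  have : P ⊆ T.erase i := fun p hp => Finset.mem_erase.2 ⟨fun h => hiP (h ▸ hp), hPT hp⟩
  have hcard2 := Finset.card_le_card this
  rw [Finset.card_erase_of_mem hi] at hcard2
  omega

/-- swap lemma: any `m`-subset product is at most the top product. -/
lemma prod_le_top (hanti : Antitone lam) {S T : Finset (Fin n)}
    (hpos : ∀ i ∈ S, 0 < lam i) (hdown : DownIn S T) :
    ∀ N : ℕ, ∀ s : Finset (Fin n), (s \ T).card ≤ N → s ⊆ S → s.card = T.card →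
      ∏ i ∈ s, lam i ≤ ∏ i ∈ T, lam i := by
  intro N
  induction N with
  | zero =>
    intro s hcard hsub hc
    have : s \ T = ∅ := Finset.card_eq_zero.1 (le_antisymm hcard (Nat.zero_le _))
    have hsT : s ⊆ T := by
      intro x hx
      by_contra hxT
      exact absurd (Finset.mem_sdiff.2 ⟨hx, hxT⟩) (by rw [this]; simp)
    rw [Finset.eq_of_subset_of_card_le hsT (le_of_eq hc.symm)]
  | succ N ihN =>
    intro s hcard hsub hc
    by_cases hempty : (s \ T).card = 0
    · exact ihN s (by omega) hsub hc
    · obtain ⟨a, ha⟩ := Finset.card_pos.1 (Nat.pos_of_ne_zero hempty)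
      have haT : (T \ s).Nonempty := by
        rw [← Finset.card_pos, Finset.card_sdiff_comm hc.symm]
        omega
      obtain ⟨b, hb⟩ := haT
      rw [Finset.mem_sdiff] at ha hb
      have hba : b ≤ a := hdown.2 b hb.1 a (Finset.mem_sdiff.2 ⟨hsub ha.1, ha.2⟩)
      have hlam : lam a ≤ lam b := hanti hba
      set s' := insert b (s.erase a) with hs'
      have hbs : b ∉ s.erase a := fun h => hb.2 (Finset.mem_of_mem_erase h)
      have hs'c : s'.card = T.card := by
        rw [hs', Finset.card_insert_of_notMem hbs, Finset.card_erase_of_mem ha.1]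
        have h1 : 1 ≤ s.card := Finset.card_pos.2 ⟨a, ha.1⟩
        omega
      have hs'sub : s' ⊆ S := by
        intro x hx
        rw [hs', Finset.mem_insert] at hx
        rcases hx with rfl | hx
        · exact hdown.1 hb.1
        · exact hsub (Finset.mem_of_mem_erase hx)
      have hs'T : (s' \ T).card ≤ N := by
        have : s' \ T = (s \ T).erase a := by
          rw [hs']
          ext x
          simp only [Finset.mem_sdiff, Finset.mem_insert, Finset.mem_erase]
          constructor
          · rintro ⟨rfl | ⟨hxa, hxs⟩, hxT⟩
            · exact absurd hb.1 hxT
            · exact ⟨hxa, hxs, hxT⟩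
          · rintro ⟨hxa, hxs, hxT⟩
            exact ⟨Or.inr ⟨hxa, hxs⟩, hxT⟩
        rw [this, Finset.card_erase_of_mem (Finset.mem_sdiff.2 ⟨ha.1, ha.2⟩)]
        omega
      have step : ∏ i ∈ s, lam i ≤ ∏ i ∈ s', lam i := by
        rw [hs', Finset.prod_insert hbs, ← Finset.mul_prod_erase s lam ha.1]
        apply mul_le_mul_of_nonneg_right hlam
        exact Finset.prod_nonneg fun x hx =>
          le_of_lt (hpos x (hsub (Finset.mem_of_mem_erase hx)))
      exact le_trans step (ihN s' hs'T hs'sub hs'c)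

/-- E2: upper bound for the top symmetric function. -/
lemma gamma_upper (hanti : Antitone lam) : ∀ (S : Finset (Fin n)) (T : Finset (Fin n)),
    GammaOn S k lam → DownIn S T → T.card = k → 1 ≤ k →
    eA S k lam ≤ (n.choose k : ℝ) * ∏ i ∈ T, lam i := by
  intro S
  induction S using Finset.strongInduction with
  | _ S ih =>
    intro T hΓ hdown hT hk
    by_cases hpos : ∀ i ∈ S, 0 < lam i
    · have hTS : T ∈ S.powersetCard k := Finset.mem_powersetCard.2 ⟨hdown.1, hT⟩
      have hcount : ((S.powersetCard k).card : ℝ) ≤ (n.choose k : ℝ) := by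
        rw [Finset.card_powersetCard]
        have h1 : S.card ≤ n := by
          have := Finset.card_le_univ S
          simpa using this
        exact_mod_cast Nat.choose_le_choose k h1
      have hTpos : 0 ≤ ∏ i ∈ T, lam i :=
        Finset.prod_nonneg fun i hi => le_of_lt (hpos i (hdown.1 hi))
      calc eA S k lam = ∑ s ∈ S.powersetCard k, ∏ i ∈ s, lam i := rfl
        _ ≤ ∑ s ∈ S.powersetCard k, ∏ i ∈ T, lam i := by
            apply Finset.sum_le_sum
            intro s hs
            rw [Finset.mem_powersetCard] at hs
            exact prod_le_top hanti hpos hdown (s \ T).card s (le_refl _) hs.1 (by rw [hs.2, hT])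
        _ = ((S.powersetCard k).card : ℝ) * ∏ i ∈ T, lam i := by
            rw [Finset.sum_const, nsmul_eq_mul]
        _ ≤ (n.choose k : ℝ) * ∏ i ∈ T, lam i := mul_le_mul_of_nonneg_right hcount hTpos
    · push_neg at hpos
      obtain ⟨u, hu, hneg'⟩ := hpos
      have hΓ' := gamma_erase_nonpos' hΓ hu hneg'
      have huT : u ∉ T := by
        intro huT
        have := down_pos hanti hΓ ⟨hdown.1, hdown.2⟩ (le_of_eq hT) hk u huT
        linarith
      have hdown' : DownIn (S.erase u) T := by
        constructor
        · intro t ht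
          exact Finset.mem_erase.2 ⟨fun h => huT (h ▸ ht), hdown.1 ht⟩
        · intro t ht v hv
          rw [Finset.mem_sdiff, Finset.mem_erase] at hv
          exact hdown.2 t ht v (Finset.mem_sdiff.2 ⟨hv.1.2, hv.2⟩)
      have h1 := (gamma_erase_nonpos hΓ hu hneg' k (le_refl k)).2
      exact le_trans h1 (ih (S.erase u) (Finset.erase_ssubset hu) T hΓ' hdown' hT hk)

/-- Garding's deletion lemma: removing any entry drops the cone index by one. -/
lemma gamma_del {S : Finset (Fin n)} (hΓ : GammaOn S k lam) {i : Fin n} (hi : i ∈ S) :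
    GammaOn (S.erase i) (k-1) lam := by
  intro j hj1 hjk
  induction j using Nat.strong_induction_on with
  | _ j ih =>
  by_contra hle
  push_neg at hle
  have hjk' : j + 1 ≤ k := by omega
  have haj1 : 0 < eA (S.erase i) (j-1) lam := by
    rcases Nat.eq_zero_or_pos (j-1) with h0 | h1
    · rw [h0, eA_zero]; norm_num
    · exact ih (j-1) (by omega) h1 (by omega)
  -- from σ_j(S) > 0
  have hrecj : eA S j lam = eA (S.erase i) j lam + lam i * eA (S.erase i) (j-1) lam := by
    have := eA_erase hi (j-1) lam
    rwa [show j - 1 + 1 = j by omega] at this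
  have hSj : 0 < eA S j lam := hΓ j hj1 (by omega)
  have htpos : 0 < lam i * eA (S.erase i) (j-1) lam := by nlinarith
  have ht : 0 < lam i := by
    by_contra hc
    push_neg at hc
    nlinarith
  -- from σ_{j+1}(S) > 0
  have hrecj1 : eA S (j+1) lam
      = eA (S.erase i) (j+1) lam + lam i * eA (S.erase i) j lam := eA_erase hi j lam
  have hSj1 : 0 < eA S (j+1) lam := hΓ (j+1) (by omega) hjk'
  have haj1' : 0 < eA (S.erase i) (j+1) lam := by nlinarith
  by_cases hcd : (S.erase i).card < j + 1
  · rw [eA_of_card_lt hcd] at haj1'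
    exact lt_irrefl _ haj1'
  · push_neg at hcd
    have hnewton := newton_ineq (S := S.erase i) lam (by omega : 1 ≤ j) hcd
    set M := (S.erase i).card with hM
    have hc1 : 0 < (((j+1) * (M - j + 1) : ℕ) : ℝ) := by
      have : 0 < (j+1) * (M - j + 1) := by positivity
      exact_mod_cast this
    have hc2 : ((j * (M - j) : ℕ) : ℝ) < (((j+1) * (M - j + 1) : ℕ) : ℝ) := by
      have : j * (M - j) < (j+1) * (M - j + 1) := by
        calc j * (M-j) ≤ j * (M-j+1) := Nat.mul_le_mul_left j (by omega)
          _ < (j+1) * (M-j+1) :=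
            mul_lt_mul_of_pos_right (by omega) (by omega)
      exact_mod_cast this
    -- contradiction via Newton
    set Ea := eA (S.erase i) (j-1) lam with hEa
    set Eb := eA (S.erase i) j lam with hEb
    set Ec := eA (S.erase i) (j+1) lam with hEc
    set X := lam i * Ea with hX
    set C1 := (((j+1) * (M - j + 1) : ℕ) : ℝ) with hC1
    set C2 := ((j * (M - j) : ℕ) : ℝ) with hC2
    have hXb : -Eb < X := by linarith [hSj, hrecj]
    have hbnn : 0 ≤ -Eb := by linarith
    have h1 : Eb^2 ≤ (-Eb) * X := by nlinarith [mul_nonneg hbnn (le_of_lt (sub_pos.2 hXb))]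
    have h2 : C2 * Eb^2 ≤ C2 * ((-Eb) * X) :=
      mul_le_mul_of_nonneg_left h1 (Nat.cast_nonneg _)
    have h3 : C2 * ((-Eb) * X) ≤ C1 * ((-Eb) * X) :=
      mul_le_mul_of_nonneg_right (le_of_lt hc2) (mul_nonneg hbnn (by nlinarith))
    have hcb : lam i * (-Eb) < Ec := by linarith [hSj1, hrecj1]
    have h4 : C1 * ((-Eb) * X) < C1 * (Ea * Ec) := by
      apply mul_lt_mul_of_pos_left _ hc1
      calc (-Eb) * X = Ea * (lam i * (-Eb)) := by rw [hX]; ring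
        _ < Ea * Ec := by exact mul_lt_mul_of_pos_left hcb haj1
    linarith [hnewton]

/-- γ-form of Newton's inequality. -/
lemma newton_gamma {S : Finset (Fin n)} {g : Fin n → ℝ} {r : ℕ} (hr : 1 ≤ r)
    (hrM : r + 1 ≤ S.card) :
    eA S (r-1) g * eA S (r+1) g ≤ ((n:ℝ)/((n:ℝ)+1)) * (eA S r g)^2 := by
  have hrn : r ≤ n := by
    have h := Finset.card_le_univ S
    simp only [Finset.card_univ, Fintype.card_fin] at h
    omega
  have hN := newton_ineq g hr hrM
  set M := S.card with hM
  set C1 := (((r+1) * (M - r + 1) : ℕ) : ℝ) with hC1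
  set C2 := ((r * (M - r) : ℕ) : ℝ) with hC2
  have hc1pos : (0:ℝ) < C1 := by
    rw [hC1]
    have : 0 < (r+1) * (M - r + 1) := by positivity
    exact_mod_cast this
  have hkey : C2 * ((n:ℝ)+1) ≤ C1 * (n:ℝ) := by
    rw [hC1, hC2]
    have hnat : (r * (M - r)) * (n+1) ≤ ((r+1) * (M - r + 1)) * n := by
      calc (r * (M - r)) * (n+1) = (r * (n+1)) * (M - r) := by ring
        _ ≤ ((r+1) * n) * (M - r + 1) := by
            apply Nat.mul_le_mul
            · calc r * (n+1) = r * n + r := by ring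
                _ ≤ r * n + n := by omega
                _ = (r+1) * n := by ring
            · omega
        _ = ((r+1) * (M - r + 1)) * n := by ring
    exact_mod_cast hnat
  set ee := eA S (r-1) g * eA S (r+1) g with hee
  set e2 := (eA S r g)^2 with he2
  have hA : C1 * (ee * ((n:ℝ)+1)) ≤ C1 * (((n:ℝ)) * e2) := by
    calc C1 * (ee * ((n:ℝ)+1)) = (C1 * ee) * ((n:ℝ)+1) := by ring
      _ ≤ (C2 * e2) * ((n:ℝ)+1) := by
          apply mul_le_mul_of_nonneg_right hN
          positivity
      _ = (C2 * ((n:ℝ)+1)) * e2 := by ring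
      _ ≤ (C1 * (n:ℝ)) * e2 := mul_le_mul_of_nonneg_right hkey (sq_nonneg _)
      _ = C1 * ((n:ℝ) * e2) := by ring
  have := le_of_mul_le_mul_left hA hc1pos
  rw [div_mul_eq_mul_div, le_div_iff₀ (by positivity : (0:ℝ) < (n:ℝ)+1)]
  linarith

/-- Maclaurin chain. -/
lemma gamma_chain {S : Finset (Fin n)} (hΓ : GammaOn S k lam) (hk : 2 ≤ k) (hkM : k ≤ S.card) :
    ∀ m : ℕ, ∀ r : ℕ, r = k - 1 - m → 1 ≤ r →
      eA S k lam * eA S (r-1) lam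
        ≤ ((n:ℝ)/((n:ℝ)+1)) * eA S (k-1) lam * eA S r lam := by
  intro m
  induction m with
  | zero =>
    intro r hr h1
    have hreq : r = k - 1 := by omega
    subst hreq
    have h := newton_gamma (S := S) (g := lam) h1 (by omega : (k-1) + 1 ≤ S.card)
    rw [show k - 1 + 1 = k by omega] at h
    nlinarith [h]
  | succ m ihm =>
    intro r hr h1
    have hrk : r + 1 ≤ k - 1 := by omega
    have hprev := ihm (r+1) (by omega) (by omega)
    rw [Nat.add_sub_cancel] at hprev
    have hnewt := newton_gamma (S := S) (g := lam) h1 (by omega : r + 1 ≤ S.card)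
    set γ := ((n:ℝ)/((n:ℝ)+1)) with hγ
    have hγ0 : 0 ≤ γ := by positivity
    have hγ1 : γ ≤ 1 := by
      rw [hγ, div_le_one (by positivity)]
      linarith
    have hEr : 0 < eA S r lam := gammaOn_pos hΓ (by omega)
    have hErm : 0 < eA S (r-1) lam := gammaOn_pos hΓ (by omega)
    have hEk1 : 0 < eA S (k-1) lam := gammaOn_pos hΓ (by omega)
    have key : (eA S k lam * eA S (r-1) lam) * eA S r lam
        ≤ (γ * eA S (k-1) lam * eA S r lam) * eA S r lam := by
      calc (eA S k lam * eA S (r-1) lam) * eA S r lam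
          = (eA S k lam * eA S r lam) * eA S (r-1) lam := by ring
        _ ≤ (γ * eA S (k-1) lam * eA S (r+1) lam) * eA S (r-1) lam :=
            mul_le_mul_of_nonneg_right hprev (le_of_lt hErm)
        _ = (γ * eA S (k-1) lam) * (eA S (r-1) lam * eA S (r+1) lam) := by ring
        _ ≤ (γ * eA S (k-1) lam) * (γ * (eA S r lam)^2) :=
            mul_le_mul_of_nonneg_left hnewt (by positivity)
        _ = (γ * γ) * (eA S (k-1) lam * (eA S r lam)^2) := by ring
        _ ≤ (γ * 1) * (eA S (k-1) lam * (eA S r lam)^2) := by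
            apply mul_le_mul_of_nonneg_right _ (by positivity)
            exact mul_le_mul_of_nonneg_left hγ1 hγ0
        _ = (γ * eA S (k-1) lam * eA S r lam) * eA S r lam := by ring
    exact le_of_mul_le_mul_right key hEr

/-- one deletion step loses at most a factor `1/(n+1)`. -/
lemma gamma_step {S : Finset (Fin n)} (hΓ : GammaOn S k lam) (hk : 2 ≤ k)
    {u : Fin n} (hu : u ∈ S) (hneg : lam u ≤ 0) {j : ℕ} (h1 : 1 ≤ j) (hj : j ≤ k - 1) :
    (1/((n:ℝ)+1)) * eA (S.erase u) j lam ≤ eA S j lam := by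
  set V := S.erase u with hV
  have hΓV : GammaOn V k lam := gamma_erase_nonpos' hΓ hu hneg
  have hkM : k ≤ V.card := by
    have h1' := gamma_card_pos V hΓV (by omega)
    have h2 := Finset.card_filter_le V (fun i => 0 < lam i)
    omega
  have hrecK : eA S k lam = eA V k lam + lam u * eA V (k-1) lam := by
    have := eA_erase hu (k-1) lam
    rwa [show k - 1 + 1 = k by omega] at this
  have hSk : 0 < eA S k lam := hΓ k (by omega) (le_refl k)
  set x := -lam u with hx
  have hx0 : 0 ≤ x := by rw [hx]; linarith
  have hxEk : x * eA V (k-1) lam ≤ eA V k lam := by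
    have : eA S k lam = eA V k lam - x * eA V (k-1) lam := by rw [hrecK, hx]; ring
    linarith
  have hchain := gamma_chain hΓV hk hkM (k-1-j) j (by omega) h1
  set γ := ((n:ℝ)/((n:ℝ)+1)) with hγ
  have hEj : 0 < eA V j lam := gammaOn_pos hΓV (by omega)
  have hEjm : 0 < eA V (j-1) lam := gammaOn_pos hΓV (by omega)
  have hEk1 : 0 < eA V (k-1) lam := gammaOn_pos hΓV (by omega)
  have hxj : x * eA V (j-1) lam ≤ γ * eA V j lam := by
    have step1 : (x * eA V (j-1) lam) * eA V (k-1) lam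
        ≤ (γ * eA V j lam) * eA V (k-1) lam := by
      calc (x * eA V (j-1) lam) * eA V (k-1) lam
          = (x * eA V (k-1) lam) * eA V (j-1) lam := by ring
        _ ≤ eA V k lam * eA V (j-1) lam :=
            mul_le_mul_of_nonneg_right hxEk (le_of_lt hEjm)
        _ ≤ γ * eA V (k-1) lam * eA V j lam := hchain
        _ = (γ * eA V j lam) * eA V (k-1) lam := by ring
    exact le_of_mul_le_mul_right step1 hEk1
  have hrecJ : eA S j lam = eA V j lam - x * eA V (j-1) lam := by
    have h := eA_erase hu (j-1) lam
    rw [show j - 1 + 1 = j by omega] at h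
    rw [h, hx]; ring
  have hγc : 1 - γ = 1/((n:ℝ)+1) := by
    rw [hγ]
    field_simp
    ring
  calc (1/((n:ℝ)+1)) * eA V j lam = (1-γ) * eA V j lam := by rw [hγc]
    _ = eA V j lam - γ * eA V j lam := by ring
    _ ≤ eA V j lam - x * eA V (j-1) lam := by linarith
    _ = eA S j lam := hrecJ.symm

/-- lower bound for `σ_j` over a cone vector. -/
lemma gamma_glemma (hanti : Antitone lam) (hk : 2 ≤ k) :
    ∀ (S T : Finset (Fin n)), GammaOn S k lam →
    ∀ j : ℕ, 1 ≤ j → j ≤ k - 1 → DownIn S T → T.card = j →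
    (1/((n:ℝ)+1))^(S.card) * ∏ i ∈ T, lam i ≤ eA S j lam := by
  intro S
  induction S using Finset.strongInduction with
  | _ S ih =>
    intro T hΓ j h1 hj hdown hT
    have hTpos : ∀ i ∈ T, 0 < lam i :=
      down_pos hanti hΓ hdown (by omega) (by omega)
    have hTnn : 0 ≤ ∏ i ∈ T, lam i :=
      Finset.prod_nonneg fun i hi => le_of_lt (hTpos i hi)
    have hθ : (0:ℝ) ≤ 1/((n:ℝ)+1) := by positivity
    have hθ1 : (1/((n:ℝ)+1)) ≤ 1 := by
      rw [div_le_one (by positivity)]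
      linarith [Nat.cast_nonneg (α := ℝ) n]
    by_cases hpos : ∀ i ∈ S, 0 < lam i
    · have hstep : (∏ i ∈ T, lam i) ≤ eA S j lam :=
        prod_le_eA (fun i hi => le_of_lt (hpos i hi))
          (Finset.mem_powersetCard.2 ⟨hdown.1, hT⟩)
      have hpow : (1/((n:ℝ)+1))^(S.card) ≤ 1 := pow_le_one₀ hθ hθ1
      nlinarith
    · push_neg at hpos
      obtain ⟨u, hu, hneg⟩ := hpos
      have huT : u ∉ T := fun huT => absurd (hTpos u huT) (by linarith)
      have hdown' : DownIn (S.erase u) T := by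
        constructor
        · intro t ht
          exact Finset.mem_erase.2 ⟨fun h => huT (h ▸ ht), hdown.1 ht⟩
        · intro t ht v hv
          rw [Finset.mem_sdiff, Finset.mem_erase] at hv
          exact hdown.2 t ht v (Finset.mem_sdiff.2 ⟨hv.1.2, hv.2⟩)
      have hΓ' := gamma_erase_nonpos' hΓ hu hneg
      have hIH := ih (S.erase u) (Finset.erase_ssubset hu) T hΓ' j h1 hj hdown' hT
      have hstep := gamma_step hΓ hk hu hneg h1 hj
      have hcard : (S.erase u).card = S.card - 1 := Finset.card_erase_of_mem hu
      have hSpos : 1 ≤ S.card := Finset.card_pos.2 ⟨u, hu⟩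
      have hpoweq : (1/((n:ℝ)+1))^(S.card)
          = (1/((n:ℝ)+1)) * (1/((n:ℝ)+1))^((S.erase u).card) := by
        rw [hcard, ← pow_succ']
        congr 1
        omega
      calc (1/((n:ℝ)+1))^(S.card) * ∏ i ∈ T, lam i
          = (1/((n:ℝ)+1)) * ((1/((n:ℝ)+1))^((S.erase u).card) * ∏ i ∈ T, lam i) := by
            rw [hpoweq]; ring
        _ ≤ (1/((n:ℝ)+1)) * eA (S.erase u) j lam := by
            apply mul_le_mul_of_nonneg_left hIH hθ
        _ ≤ eA S j lam := hstep

lemma esymmOn_eq_eA (S : Finset (Fin n)) (j : ℕ) (lam : Fin n → ℝ) :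
    esymmOn S (j : ℤ) lam = eA S j lam := by
  unfold esymmOn eA
  rw [if_neg (by exact_mod_cast Int.not_lt.2 (Int.ofNat_nonneg j))]
  norm_num

lemma firstIdx_card {m : ℕ} (hm : m ≤ n) :
    ((Finset.univ : Finset (Fin n)).filter (fun x : Fin n => (x:ℕ) < m)).card = m := by
  have h : ((Finset.univ : Finset (Fin n)).filter (fun x : Fin n => (x:ℕ) < m))
      = (Finset.range m).attachFin (fun a ha => lt_of_lt_of_le (Finset.mem_range.1 ha) hm) := by
    ext x
    simp [Finset.mem_attachFin]
  rw [h, Finset.card_attachFin, Finset.card_range]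

theorem sigma_km1_deleted_large {n : ℕ} (l k : ℕ) (hl : 1 ≤ l) (hlk : l < k) (hkn : k ≤ n)
    (δ A : ℝ) (hδ : δ ∈ Set.Ioo (0 : ℝ) 1) (hA : A > 0) :
    ∃ δ' : ℝ, δ' > 0 ∧
      ∀ lam : Fin n → ℝ, GammaCone k lam → Antitone lam →
        lam ⟨l - 1, by omega⟩ ≥ δ * lam ⟨0, by omega⟩ →
        lam ⟨l, by omega⟩ ≤ δ' * lam ⟨0, by omega⟩ →
        ∀ i : Fin n, l ≤ (i : ℕ) →
          esymmOn ({i}ᶜ : Finset (Fin n)) ((k : ℤ) - 1) lam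
            ≥ A * esymm (k : ℤ) lam / lam ⟨0, by omega⟩ := by
  have hk2 : 2 ≤ k := by omega
  have hn : 1 ≤ n := by omega
  set B : ℝ := (n.choose k : ℝ) with hB
  have hBpos : 0 < B := by
    rw [hB]
    exact_mod_cast Nat.choose_pos hkn
  set θ : ℝ := (1/((n:ℝ)+1))^(n-1) with hθ
  have hθpos : 0 < θ := by rw [hθ]; positivity
  refine ⟨min (1/A) (θ/(A*B)), lt_min (by positivity) (by positivity), ?_⟩
  intro lam hΓc hanti hdel hsmall i hi
  set δ' : ℝ := min (1/A) (θ/(A*B)) with hδ'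
  -- convert to eA language
  have hΓ : GammaOn (univ : Finset (Fin n)) k lam := by
    intro j h1 hjk
    have := hΓc j h1 hjk
    rwa [esymm, esymmOn_eq_eA] at this
  have hgoal_eq : esymmOn ({i}ᶜ : Finset (Fin n)) ((k : ℤ) - 1) lam
      = eA (univ.erase i) (k-1) lam := by
    rw [Finset.compl_singleton, show ((k:ℤ) - 1) = ((k-1 : ℕ) : ℤ) by omega, esymmOn_eq_eA]
  have hσ_eq : esymm (k : ℤ) lam = eA (univ : Finset (Fin n)) k lam := by
    rw [esymm, esymmOn_eq_eA]
  rw [hgoal_eq, hσ_eq, ge_iff_le]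
  set i0 : Fin n := ⟨0, by omega⟩ with hi0
  set z : ℝ := lam i0 with hzdef
  -- z > 0
  have hz : 0 < z := by
    have hd : DownIn (univ : Finset (Fin n)) {i0} := by
      refine ⟨Finset.subset_univ _, ?_⟩
      intro t ht u _
      rw [Finset.mem_singleton] at ht
      subst ht
      rw [Fin.le_def]
      exact Nat.zero_le _
    exact down_pos hanti hΓ hd (by simp; omega) (by omega) i0 (Finset.mem_singleton_self i0)
  set σk : ℝ := eA (univ : Finset (Fin n)) k lam with hσk
  have hσkpos : 0 < σk := hΓ k (by omega) (le_refl k)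
  -- small entries
  have hil : lam ⟨l, by omega⟩ ≤ δ' * z := hsmall
  have hlami : lam i ≤ δ' * z := by
    refine le_trans (hanti ?_) hil
    rw [Fin.le_def]
    exact hi
  have hδ'A : A * δ' ≤ 1 := by
    have h1 : δ' ≤ 1/A := min_le_left _ _
    rw [div_eq_mul_inv] at h1
    calc A * δ' ≤ A * (1 * A⁻¹) := mul_le_mul_of_nonneg_left h1 (le_of_lt hA)
      _ = 1 := by field_simp
  have hδ'B : A * B * δ' ≤ θ := by
    have h1 : δ' ≤ θ/(A*B) := min_le_right _ _
    have h2 : 0 < A * B := by positivity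
    calc A * B * δ' ≤ A * B * (θ/(A*B)) := mul_le_mul_of_nonneg_left h1 (le_of_lt h2)
      _ = θ := by field_simp
  -- top set
  set Tk : Finset (Fin n) := (Finset.univ.filter (fun x => (x:ℕ) < k)) with hTk
  have hTkcard : Tk.card = k := firstIdx_card hkn
  have hTkdown : DownIn (univ : Finset (Fin n)) Tk := by
    refine ⟨Finset.subset_univ _, ?_⟩
    intro t ht u hu
    rw [hTk, Finset.mem_filter] at ht
    rw [Finset.mem_sdiff, hTk, Finset.mem_filter] at hu
    have h2 : ¬ ((u:ℕ) < k) := fun h => hu.2 ⟨Finset.mem_univ u, h⟩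
    have h3 : (t:ℕ) < k := ht.2
    rw [Fin.le_def]
    omega
  have hupper : σk ≤ B * ∏ x ∈ Tk, lam x :=
    gamma_upper hanti univ Tk hΓ hTkdown hTkcard (by omega)
  set μS : Finset (Fin n) := univ.erase i with hμS
  have hiu : i ∈ (univ : Finset (Fin n)) := Finset.mem_univ i
  have hident : σk = eA μS k lam + lam i * eA μS (k-1) lam := by
    have h := eA_erase hiu (k-1) lam
    rw [show k - 1 + 1 = k by omega] at h
    exact h
  have hμcard : μS.card = n - 1 := by
    rw [hμS, Finset.card_erase_of_mem hiu, Finset.card_univ, Fintype.card_fin]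
  by_cases hcaseA : 0 < lam i ∧ eA μS k lam ≤ 0
  · -- Case A
    obtain ⟨hipos, hknonpos⟩ := hcaseA
    have keyA : σk ≤ lam i * eA μS (k-1) lam := by linarith [hident]
    have hμpos : 0 < eA μS (k-1) lam := by
      rcases lt_trichotomy (eA μS (k-1) lam) 0 with h | h | h
      · nlinarith
      · nlinarith
      · exact h
    rw [div_le_iff₀ hz]
    have hAi : A * lam i ≤ z := by
      calc A * lam i ≤ A * (δ' * z) := mul_le_mul_of_nonneg_left hlami (le_of_lt hA)
        _ = (A * δ') * z := by ring
        _ ≤ 1 * z := mul_le_mul_of_nonneg_right hδ'A (le_of_lt hz)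
        _ = z := one_mul z
    calc A * σk ≤ A * (lam i * eA μS (k-1) lam) :=
          mul_le_mul_of_nonneg_left keyA (le_of_lt hA)
      _ = (A * lam i) * eA μS (k-1) lam := by ring
      _ ≤ z * eA μS (k-1) lam := mul_le_mul_of_nonneg_right hAi (le_of_lt hμpos)
      _ = eA μS (k-1) lam * z := by ring
  · -- Case B
    push_neg at hcaseA
    have hΓμ : GammaOn μS k lam := by
      by_cases hineg : lam i ≤ 0
      · exact gamma_erase_nonpos' hΓ hiu hineg
      · push_neg at hineg
        have hμk := hcaseA hineg
        intro j h1 hjk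
        rcases Nat.lt_or_ge j k with hjlt | hjge
        · exact gamma_del hΓ hiu j h1 (by omega)
        · have : j = k := by omega
          subst this
          exact hμk
    -- choose the comparison set
    obtain ⟨w, T', hT'down, hT'card, hsplit, hwle⟩ :
        ∃ (w : Fin n) (T' : Finset (Fin n)), DownIn μS T' ∧ T'.card = k - 1 ∧
          (∏ x ∈ Tk, lam x) = lam w * ∏ x ∈ T', lam x ∧ lam w ≤ δ' * z := by
      by_cases hik : (i:ℕ) < k
      · refine ⟨i, Tk.erase i, ?_, ?_, ?_, hlami⟩
        · constructor
          · intro x hx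
            rw [Finset.mem_erase] at hx
            exact Finset.mem_erase.2 ⟨hx.1, Finset.mem_univ x⟩
          · intro t ht u hu
            rw [Finset.mem_erase, hTk, Finset.mem_filter] at ht
            rw [Finset.mem_sdiff, Finset.mem_erase] at hu
            have hu2 : u ∉ Tk.erase i := hu.2
            have : ¬ ((u:ℕ) < k) := by
              intro huk
              exact hu2 (Finset.mem_erase.2 ⟨hu.1.1, by rw [hTk, Finset.mem_filter]; exact ⟨Finset.mem_univ u, huk⟩⟩)
            have h4 : (t:ℕ) < k := ht.2.2
            rw [Fin.le_def]
            omega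
        · rw [Finset.card_erase_of_mem (by rw [hTk, Finset.mem_filter]; exact ⟨Finset.mem_univ i, hik⟩), hTkcard]
        · exact (Finset.mul_prod_erase Tk lam (by rw [hTk, Finset.mem_filter]; exact ⟨Finset.mem_univ i, hik⟩)).symm
      · push_neg at hik
        have hkn' : k - 1 < n := by omega
        set w : Fin n := ⟨k-1, hkn'⟩ with hw
        set T' : Finset (Fin n) := (Finset.univ.filter (fun x => (x:ℕ) < k - 1)) with hT'
        refine ⟨w, T', ?_, firstIdx_card (by omega), ?_, ?_⟩
        · constructor
          · intro x hx
            rw [hT', Finset.mem_filter] at hx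
            refine Finset.mem_erase.2 ⟨?_, Finset.mem_univ x⟩
            intro h
            rw [h] at hx
            omega
          · intro t ht u hu
            rw [hT', Finset.mem_filter] at ht
            rw [Finset.mem_sdiff] at hu
            have h5 : ¬ ((u:ℕ) < k - 1) := by
              intro huk
              exact hu.2 (by rw [hT', Finset.mem_filter]; exact ⟨Finset.mem_univ u, huk⟩)
            have h6 : (t:ℕ) < k - 1 := ht.2
            rw [Fin.le_def]
            omega
        · have hTkeq : Tk = insert w T' := by
            ext x
            rw [hTk, hT', Finset.mem_insert, Finset.mem_filter, Finset.mem_filter, hw]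
            constructor
            · rintro ⟨_, hxk⟩
              rcases Nat.lt_or_ge (x:ℕ) (k-1) with h | h
              · exact Or.inr ⟨Finset.mem_univ x, h⟩
              · left
                apply Fin.ext
                have hwv : ((⟨k-1, hkn'⟩ : Fin n) :ℕ) = k - 1 := rfl
                omega
            · rintro (rfl | ⟨_, hxk⟩)
              · refine ⟨Finset.mem_univ _, ?_⟩
                have hwv : ((⟨k-1, hkn'⟩ : Fin n) :ℕ) = k - 1 := rfl
                omega
              · exact ⟨Finset.mem_univ x, by omega⟩
          have hwT' : w ∉ T' := by
            rw [hT', Finset.mem_filter]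
            push_neg
            intro _
            have hwv : (w:ℕ) = k - 1 := rfl
            omega
          rw [hTkeq, Finset.prod_insert hwT']
        · refine le_trans (hanti ?_) hil
          rw [Fin.le_def]
          show l ≤ k - 1
          omega
    -- common ending
    have hGl := gamma_glemma hanti hk2 μS T' hΓμ (k-1) (by omega) (le_refl _) hT'down hT'card
    rw [hμcard] at hGl
    have hT'nn : 0 ≤ ∏ x ∈ T', lam x := by
      apply Finset.prod_nonneg
      intro x hx
      exact le_of_lt (down_pos hanti hΓμ hT'down (by omega) (by omega) x hx)
    have hABw : A * B * lam w ≤ θ * z := by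
      have hwnn : lam w ≤ δ' * z := hwle
      calc A * B * lam w ≤ A * B * (δ' * z) :=
            mul_le_mul_of_nonneg_left hwnn (by positivity)
        _ = (A * B * δ') * z := by ring
        _ ≤ θ * z := mul_le_mul_of_nonneg_right hδ'B (le_of_lt hz)
    rw [div_le_iff₀ hz]
    calc A * σk ≤ A * (B * ∏ x ∈ Tk, lam x) := mul_le_mul_of_nonneg_left hupper (le_of_lt hA)
      _ = (A * B * lam w) * ∏ x ∈ T', lam x := by rw [hsplit]; ring
      _ ≤ (θ * z) * ∏ x ∈ T', lam x := mul_le_mul_of_nonneg_right hABw hT'nn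
      _ = z * (θ * ∏ x ∈ T', lam x) := by ring
      _ = z * ((1/((n:ℝ)+1))^(n-1) * ∏ x ∈ T', lam x) := by rw [hθ]
      _ ≤ z * eA μS (k-1) lam := mul_le_mul_of_nonneg_left hGl (le_of_lt hz)
      _ = eA μS (k-1) lam * z := by ring

end Cone
end

section
/- Let 1 ≤ m < k ≤ n. There exists a constant C > 0, depending only on n and m, such that for every λ = (λ_1,…,λ_n) ∈ Γ_k with λ_1 ≥ λ_2 ≥ ⋯ ≥ λ_n one has σ_m(λ) ≤ C λ_1 λ_2 ⋯ λ_m. -/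
open Finset

namespace SigmaAux

variable {n : ℕ} (lam : Fin n → ℝ)

noncomputable def E (S : Finset (Fin n)) (j : ℕ) : ℝ := ∑ s ∈ S.powersetCard j, ∏ i ∈ s, lam i

lemma E_zero (S : Finset (Fin n)) : E lam S 0 = 1 := by simp [E]

lemma E_insert {i : Fin n} {T : Finset (Fin n)} (h : i ∉ T) (j : ℕ) :
    E lam (insert i T) (j+1) = E lam T (j+1) + lam i * E lam T j := by
  classical
  unfold E
  rw [Finset.powersetCard_succ_insert h, Finset.sum_union, Finset.sum_image, Finset.mul_sum]
  · congr 1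
    refine Finset.sum_congr rfl fun s hs => ?_
    have hi : i ∉ s := fun hmem => h ((Finset.mem_powersetCard.1 hs).1 hmem)
    rw [Finset.prod_insert hi]
  · intro s hs t ht hst
    have hi : i ∉ s := fun hmem => h ((Finset.mem_powersetCard.1 hs).1 hmem)
    have hi' : i ∉ t := fun hmem => h ((Finset.mem_powersetCard.1 ht).1 hmem)
    have := congrArg (fun u => Finset.erase u i) hst
    simpa [Finset.erase_insert hi, Finset.erase_insert hi'] using this
  · rw [Finset.disjoint_right]
    intro s hs hs'
    obtain ⟨t, ht, rfl⟩ := Finset.mem_image.1 hs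
    exact (fun hmem => h ((Finset.mem_powersetCard.1 hs').1 hmem)) (Finset.mem_insert_self i t)

lemma E_erase {S : Finset (Fin n)} {i : Fin n} (hi : i ∈ S) (hneg : lam i ≤ 0) {k : ℕ}
    (hS : ∀ j, 1 ≤ j → j ≤ k → 0 < E lam S j) :
    ∀ j, j ≤ k → 0 < E lam (S.erase i) j := by
  classical
  intro j
  induction j with
  | zero => intro _; rw [E_zero]; norm_num
  | succ j ih =>
    intro hjk
    have hrec : E lam S (j+1) = E lam (S.erase i) (j+1) + lam i * E lam (S.erase i) j := by
      conv_lhs => rw [← Finset.insert_erase hi]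
      exact E_insert lam (Finset.notMem_erase i S) j
    have h1 : 0 < E lam S (j+1) := hS (j+1) (by omega) hjk
    have h2 : 0 < E lam (S.erase i) j := ih (by omega)
    nlinarith

lemma E_subset {k : ℕ} : ∀ (c : ℕ) (S T : Finset (Fin n)), (S \ T).card = c → T ⊆ S →
    (∀ i ∈ S, i ∉ T → lam i ≤ 0) →
    (∀ j, 1 ≤ j → j ≤ k → 0 < E lam S j) →
    ∀ j, j ≤ k → 0 < E lam T j := by
  classical
  intro c
  induction c with
  | zero =>
    intro S T hc hTS _ hS j hj
    have : S = T := Finset.Subset.antisymm (fun x hx => by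
      by_contra hx'
      have : x ∈ S \ T := Finset.mem_sdiff.2 ⟨hx, hx'⟩
      have := Finset.card_pos.2 ⟨x, this⟩
      omega) hTS
    rcases Nat.eq_zero_or_pos j with rfl | hj1
    · rw [E_zero]; norm_num
    · exact this ▸ hS j hj1 hj
  | succ c ih =>
    intro S T hc hTS hneg hS j hj
    have hne : (S \ T).Nonempty := Finset.card_pos.1 (by omega)
    obtain ⟨i, hi⟩ := hne
    have hiS : i ∈ S := (Finset.mem_sdiff.1 hi).1
    have hiT : i ∉ T := (Finset.mem_sdiff.1 hi).2
    have hstep := E_erase lam hiS (hneg i hiS hiT) hS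
    refine ih (S.erase i) T ?_ ?_ ?_ (fun j' h1 h2 => hstep j' h2) j hj
    · have : S.erase i \ T = (S \ T).erase i := by
        ext x; simp only [Finset.mem_sdiff, Finset.mem_erase]; tauto
      rw [this, Finset.card_erase_of_mem hi]; omega
    · intro x hx
      exact Finset.mem_erase.2 ⟨fun h => hiT (h ▸ hx), hTS hx⟩
    · intro x hx hx'
      exact hneg x (Finset.mem_of_mem_erase hx) hx'

lemma nat_le_strictMono {r : ℕ} (g : Fin r → ℕ) (hg : StrictMono g) :
    ∀ t (j : Fin r), (j : ℕ) = t → t ≤ g j := by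
  intro t
  induction t with
  | zero => intro j _; omega
  | succ t ihh =>
    intro j hj
    have hlt : t < r := by omega
    have h1 := ihh ⟨t, hlt⟩ rfl
    have h2 : g ⟨t, hlt⟩ < g j := hg (by simp [Fin.lt_def, hj])
    omega

lemma filter_lt_eq_image {r : ℕ} (hr : r ≤ n) :
    Finset.univ.filter (fun i : Fin n => (i : ℕ) < r) =
      Finset.univ.image (fun j : Fin r => (⟨j, lt_of_lt_of_le j.isLt hr⟩ : Fin n)) := by
  ext a
  simp only [Finset.mem_filter, Finset.mem_univ, true_and, Finset.mem_image]
  constructor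
  · intro ha; exact ⟨⟨a, ha⟩, rfl⟩
  · rintro ⟨j, rfl⟩; exact j.isLt

lemma iota_inj {r : ℕ} (hr : r ≤ n) :
    Function.Injective (fun j : Fin r => (⟨j, lt_of_lt_of_le j.isLt hr⟩ : Fin n)) := by
  intro a b hab
  have h2 : (a : ℕ) = (b : ℕ) := congrArg (fun x : Fin n => (x : ℕ)) hab
  exact Fin.ext h2

lemma card_filter_lt {r : ℕ} (hr : r ≤ n) :
    (Finset.univ.filter (fun i : Fin n => (i : ℕ) < r)).card = r := by
  rw [filter_lt_eq_image hr, Finset.card_image_of_injective _ (iota_inj hr), Finset.card_univ,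
    Fintype.card_fin]

lemma set_eq_image {s : Finset (Fin n)} {r : ℕ} (hcard : s.card = r) :
    s = Finset.univ.image (s.orderEmbOfFin hcard) := by
  ext a
  simp only [Finset.mem_image, Finset.mem_univ, true_and]
  constructor
  · intro ha
    have : a ∈ Set.range (s.orderEmbOfFin hcard) := by
      rw [Finset.range_orderEmbOfFin]; exact ha
    exact this
  · rintro ⟨j, rfl⟩
    exact Finset.orderEmbOfFin_mem s hcard j

lemma le_orderEmbOfFin {s : Finset (Fin n)} {r : ℕ} (hcard : s.card = r) (j : Fin r) :
    (j : ℕ) ≤ ((s.orderEmbOfFin hcard j : Fin n) : ℕ) := by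
  have hmono : StrictMono (fun j : Fin r => ((s.orderEmbOfFin hcard j : Fin n) : ℕ)) := by
    intro a b hab
    exact (s.orderEmbOfFin hcard).strictMono hab
  exact nat_le_strictMono _ hmono (j : ℕ) j rfl

/-- product of positive entries over a set of card r is at most the product over
the first r indices. -/
lemma prod_term_le {r : ℕ} (hr : r ≤ n) (hanti : Antitone lam)
    (s : Finset (Fin n)) (hcard : s.card = r) (hspos : ∀ x ∈ s, 0 < lam x) :
    ∏ x ∈ s, lam x ≤ ∏ i ∈ Finset.univ.filter (fun i : Fin n => (i : ℕ) < r), lam i := by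
  classical
  rw [set_eq_image hcard, filter_lt_eq_image hr,
    Finset.prod_image (fun a _ b _ h => (s.orderEmbOfFin hcard).injective h),
    Finset.prod_image (fun a _ b _ h => iota_inj hr h)]
  apply Finset.prod_le_prod
  · intro j _
    exact le_of_lt (hspos _ (Finset.orderEmbOfFin_mem s hcard j))
  · intro j _
    exact hanti (le_orderEmbOfFin hcard j)

/-- bound on |term| products via the constant B. -/
lemma prod_abs_le {m : ℕ} (hmn : m ≤ n) {B : ℝ} (_hB : 0 ≤ B)
    (hC : ∀ (i j : Fin n), (j : ℕ) < m → (j : ℕ) ≤ (i : ℕ) → |lam i| ≤ B * lam j)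
    (_hpos : ∀ i : Fin n, (i : ℕ) < m → 0 < lam i)
    (s : Finset (Fin n)) (hcard : s.card = m) :
    ∏ x ∈ s, lam x ≤ B ^ m * ∏ i ∈ Finset.univ.filter (fun i : Fin n => (i : ℕ) < m), lam i := by
  classical
  calc ∏ x ∈ s, lam x ≤ |∏ x ∈ s, lam x| := le_abs_self _
    _ = ∏ x ∈ s, |lam x| := Finset.abs_prod s lam
    _ ≤ B ^ m * ∏ i ∈ Finset.univ.filter (fun i : Fin n => (i : ℕ) < m), lam i := by
        rw [set_eq_image hcard, filter_lt_eq_image hmn,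
          Finset.prod_image (fun a _ b _ h => (s.orderEmbOfFin hcard).injective h),
          Finset.prod_image (fun a _ b _ h => iota_inj hmn h)]
        have h1 : ∀ j : Fin m, |lam (s.orderEmbOfFin hcard j)|
            ≤ B * lam ⟨j, lt_of_lt_of_le j.isLt hmn⟩ := by
          intro j
          exact hC _ _ j.isLt (le_orderEmbOfFin hcard j)
        calc ∏ j : Fin m, |lam (s.orderEmbOfFin hcard j)|
            ≤ ∏ j : Fin m, B * lam ⟨j, lt_of_lt_of_le j.isLt hmn⟩ := by
              apply Finset.prod_le_prod
              · intro j _; exact abs_nonneg _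
              · intro j _; exact h1 j
          _ = B ^ m * ∏ j : Fin m, lam ⟨j, lt_of_lt_of_le j.isLt hmn⟩ := by
              rw [Finset.prod_mul_distrib, Finset.prod_const, Finset.card_univ, Fintype.card_fin]

end SigmaAux

theorem sigma_m_le_prod {n : ℕ} (m : ℕ) (hm : 1 ≤ m) (hmn : m < n) :
    ∃ C : ℝ, C > 0 ∧
      ∀ k : ℕ, m < k → k ≤ n →
        ∀ lam : Fin n → ℝ, GammaCone k lam → Antitone lam →
          esymm (m : ℤ) lam
            ≤ C * ∏ i ∈ Finset.univ.filter (fun i : Fin n => (i : ℕ) < m), lam i := by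
  classical
  open SigmaAux in
  set B : ℝ := (n.choose (m+1) : ℝ) + 1 with hBdef
  have hB1 : (1:ℝ) ≤ B := by
    have : (0:ℝ) ≤ (n.choose (m+1) : ℝ) := Nat.cast_nonneg _
    rw [hBdef]; linarith
  have hB0 : (0:ℝ) ≤ B := by linarith
  refine ⟨((n.choose m : ℝ) + 1) * B ^ m, by positivity, ?_⟩
  intro k hmk hkn lam hGamma hanti
  have hEuniv : ∀ j, 1 ≤ j → j ≤ k → 0 < E lam Finset.univ j := by
    intro j h1 h2
    have := hGamma j h1 h2
    unfold esymm esymmOn at this; rw [if_neg (by omega)] at this; simpa [E] using this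
  set P := Finset.univ.filter (fun i : Fin n => 0 < lam i) with hPdef
  have hnotP : ∀ i : Fin n, i ∉ P → lam i ≤ 0 := by
    intro i hi
    by_contra h
    exact hi (Finset.mem_filter.2 ⟨Finset.mem_univ _, by linarith⟩)
  have hP : ∀ j, j ≤ k → 0 < E lam P j :=
    E_subset lam _ Finset.univ P rfl (Finset.subset_univ P)
      (fun i _ hi => hnotP i hi) hEuniv
  have hPk : k ≤ P.card := by
    by_contra h
    have hemp : P.powersetCard k = ∅ := Finset.powersetCard_eq_empty.2 (by omega)
    have := hP k le_rfl
    rw [E, hemp] at this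
    simp at this
  -- positivity of the first m+1 entries
  have hposm : ∀ i : Fin n, (i : ℕ) ≤ m → 0 < lam i := by
    have hne : P.Nonempty := Finset.card_pos.1 (by omega)
    have hx : 0 < lam (P.max' hne) := (Finset.mem_filter.1 (P.max'_mem hne)).2
    have hcard : P.card ≤ ((P.max' hne : Fin n) : ℕ) + 1 := by
      have hsub : P ⊆ Finset.Iic (P.max' hne) := fun y hy => Finset.mem_Iic.2 (P.le_max' y hy)
      calc P.card ≤ (Finset.Iic (P.max' hne)).card := Finset.card_le_card hsub
        _ = ((P.max' hne : Fin n) : ℕ) + 1 := Fin.card_Iic _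
    intro i hi
    have hle : i ≤ P.max' hne := by rw [Fin.le_def]; omega
    exact lt_of_lt_of_le hx (hanti hle)
  have hm1n : m + 1 ≤ n := hmn
  set jm : Fin n := ⟨m, hmn⟩ with hjm
  have hμ : 0 < lam jm := hposm jm le_rfl
  set Q : ℝ := ∏ i ∈ Finset.univ.filter (fun i : Fin n => (i : ℕ) < m), lam i with hQdef
  have hQpos : 0 < Q :=
    Finset.prod_pos fun i hi => hposm i (le_of_lt (Finset.mem_filter.1 hi).2)
  have hQ' : ∏ i ∈ Finset.univ.filter (fun i : Fin n => (i : ℕ) < m+1), lam i = Q * lam jm := by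
    have hins : Finset.univ.filter (fun i : Fin n => (i : ℕ) < m+1)
        = insert jm (Finset.univ.filter (fun i : Fin n => (i : ℕ) < m)) := by
      ext a
      simp only [Finset.mem_filter, Finset.mem_univ, true_and, Finset.mem_insert, hjm,
        Fin.ext_iff]
      omega
    rw [hins, Finset.prod_insert (by simp [hjm]), mul_comm, hQdef]
  -- lower bound on E P m
  have hlow : Q ≤ E lam P m := by
    have hIm : (Finset.univ.filter fun i : Fin n => (i : ℕ) < m) ∈ P.powersetCard m := by
      rw [Finset.mem_powersetCard]
      constructor
      · intro x hx
        exact Finset.mem_filter.2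
          ⟨Finset.mem_univ _, hposm x (le_of_lt (Finset.mem_filter.1 hx).2)⟩
      · exact card_filter_lt (by omega)
    exact Finset.single_le_sum (f := fun s => ∏ i ∈ s, lam i)
      (fun s hs => Finset.prod_nonneg fun x hx => le_of_lt
        ((Finset.mem_filter.1 ((Finset.mem_powersetCard.1 hs).1 hx)).2)) hIm
  -- upper bound on E P (m+1)
  have hup : E lam P (m+1) ≤ (n.choose (m+1) : ℝ) * (Q * lam jm) := by
    rw [← hQ']
    calc E lam P (m+1)
        ≤ ∑ _s ∈ P.powersetCard (m+1),
            ∏ i ∈ Finset.univ.filter (fun i : Fin n => (i : ℕ) < m+1), lam i := by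
          apply Finset.sum_le_sum
          intro s hs
          exact prod_term_le lam hm1n hanti s (Finset.mem_powersetCard.1 hs).2
            (fun x hx => (Finset.mem_filter.1 ((Finset.mem_powersetCard.1 hs).1 hx)).2)
      _ = ((P.powersetCard (m+1)).card : ℝ)
            * ∏ i ∈ Finset.univ.filter (fun i : Fin n => (i : ℕ) < m+1), lam i := by
          rw [Finset.sum_const, nsmul_eq_mul]
      _ ≤ (n.choose (m+1) : ℝ)
            * ∏ i ∈ Finset.univ.filter (fun i : Fin n => (i : ℕ) < m+1), lam i := by
          apply mul_le_mul_of_nonneg_right _ (by rw [hQ']; positivity)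
          rw [Finset.card_powersetCard]
          exact_mod_cast Nat.choose_le_choose (m+1) (le_trans (Finset.card_le_univ P)
            (by simp))
  -- bound on negative entries
  have hneg : ∀ i : Fin n, lam i < 0 → -lam i ≤ (n.choose (m+1) : ℝ) * lam jm := by
    intro i hi
    have hiP : i ∉ P := by
      simp only [hPdef, Finset.mem_filter, Finset.mem_univ, true_and]
      linarith
    have hT : ∀ j, j ≤ k → 0 < E lam (insert i P) j :=
      E_subset lam _ Finset.univ (insert i P) rfl (Finset.subset_univ _)
        (fun x _ hx => hnotP x (fun h => hx (Finset.mem_insert_of_mem h))) hEuniv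
    have h1 : 0 < E lam P (m+1) + lam i * E lam P m := by
      have := hT (m+1) (by omega)
      rwa [E_insert lam hiP m] at this
    have e1 : (-lam i) * Q ≤ (-lam i) * E lam P m :=
      mul_le_mul_of_nonneg_left hlow (by linarith)
    have h2 : (-lam i) * Q ≤ ((n.choose (m+1) : ℝ) * lam jm) * Q := by nlinarith
    exact le_of_mul_le_mul_right h2 hQpos
  -- the pointwise bound
  have hC : ∀ (i j : Fin n), (j : ℕ) < m → (j : ℕ) ≤ (i : ℕ) → |lam i| ≤ B * lam j := by
    intro i j hjm' hji
    have hj : 0 < lam j := hposm j (by omega)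
    rcases le_or_gt 0 (lam i) with h | h
    · rw [abs_of_nonneg h]
      have hij : lam i ≤ lam j := hanti (by rw [Fin.le_def]; omega)
      nlinarith
    · rw [abs_of_neg h]
      have h1 := hneg i h
      have h2 : lam jm ≤ lam j := by
        have hv : (jm : ℕ) = m := rfl
        exact hanti (by rw [Fin.le_def, hv]; omega)
      have hch : (0:ℝ) ≤ (n.choose (m+1) : ℝ) := by positivity
      calc -lam i ≤ (n.choose (m+1) : ℝ) * lam jm := h1
        _ ≤ (n.choose (m+1) : ℝ) * lam j := by nlinarith
        _ ≤ B * lam j := by rw [hBdef]; nlinarith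
  -- final estimate
  have hmain : esymm (m : ℤ) lam = E lam Finset.univ m := by
    simp [esymm, esymmOn, E]
  rw [hmain]
  calc E lam Finset.univ m
      ≤ ∑ _s ∈ (Finset.univ : Finset (Fin n)).powersetCard m, B ^ m * Q := by
        apply Finset.sum_le_sum
        intro s hs
        rw [hQdef]
        exact prod_abs_le lam (le_of_lt hmn) hB0 hC (fun i hi => hposm i (by omega)) s
          (Finset.mem_powersetCard.1 hs).2
    _ = (((Finset.univ : Finset (Fin n)).powersetCard m).card : ℝ) * (B ^ m * Q) := by
        rw [Finset.sum_const, nsmul_eq_mul]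
    _ ≤ ((n.choose m : ℝ) + 1) * B ^ m * Q := by
        have hcard : (((Finset.univ : Finset (Fin n)).powersetCard m).card : ℝ)
            ≤ (n.choose m : ℝ) + 1 := by
          rw [Finset.card_powersetCard]
          simp only [Finset.card_univ, Fintype.card_fin]
          push_cast
          linarith
        have hbq : (0:ℝ) ≤ B ^ m * Q := mul_nonneg (pow_nonneg hB0 m) (le_of_lt hQpos)
        have h := mul_le_mul_of_nonneg_right hcard hbq
        have hr : ((n.choose m : ℝ) + 1) * (B ^ m * Q) = ((n.choose m : ℝ) + 1) * B ^ m * Q := by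
          ring
        linarith
end
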